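/- Let V be a finite set, let f : 2^V → ℤ be skew-supermodular, and let h : 2^V → ℤ be a symmetric submodular function with nonnegative values. Then the function g = f − h (defined by g(S) = f(S) − h(S) for all S ⊆ V) is skew-supermodular. -/
import Mathlib

open Finset

/-- A set function `f` on subsets of a finite ground set `V` is skew-supermodular if
for all `A, B` at least one of the two inequalities holds. -/
def SkewSupermodular {V : Type*} [DecidableEq V] (f : Finset V → ℤ) : Prop :=
  ∀ A B : Finset V,
    f A + f B ≤ f (A ∩ B) + f (A ∪ B) ∨ f A + f B ≤ f (A \ B) + f (B \ A)

/-- Submodularity: `h(A) + h(B) ≥ h(A ∪ B) + h(A ∩ B)`. -/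
def SubmodularFn {V : Type*} [DecidableEq V] (h : Finset V → ℤ) : Prop :=
  ∀ A B : Finset V, h (A ∪ B) + h (A ∩ B) ≤ h A + h B

/-- Symmetry: `h(S) = h(V \ S)`. -/
def SymmetricFn {V : Type*} [Fintype V] [DecidableEq V] (h : Finset V → ℤ) : Prop :=
  ∀ S : Finset V, h S = h (Finset.univ \ S)

/-- If `f` is skew-supermodular and `h` is a nonnegative symmetric submodular function,
then `g = f - h` is skew-supermodular. -/
theorem stmt0 {V : Type*} [Fintype V] [DecidableEq V]
    (f h : Finset V → ℤ)
    (hf : SkewSupermodular f) (hsub : SubmodularFn h) (hsym : SymmetricFn h)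
    (hnonneg : ∀ S : Finset V, 0 ≤ h S) :
    SkewSupermodular (fun S => f S - h S) := by
  intro A B
  rcases hf A B with hc | hc
  · left
    have := hsub A B
    simp only []
    linarith
  · right
    have key : h (A \ B) + h (B \ A) ≤ h A + h B := by
      have h1 := hsub A (univ \ B)
      have e1 : A ∩ (univ \ B) = A \ B := by
        ext x; simp [Finset.mem_sdiff, Finset.mem_inter]
      have e2 : univ \ (A ∪ (univ \ B)) = B \ A := by
        ext x; simp [Finset.mem_sdiff, Finset.mem_union]; tauto
      have h2 : h (A ∪ (univ \ B)) = h (B \ A) := by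
        rw [hsym (A ∪ (univ \ B)), e2]
      rw [e1, h2, ← hsym B] at h1
      linarith
    simp only []
    linarith
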